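/- arXiv:2501.09712 — 4 statements merged into one kernel-verified Lean document; each statement's English description precedes it below -/
import Mathlib

section
/- Let p_1, …, p_r be probability distributions on a finite set [d] and let (Λ_1, …, Λ_r) be functions Λ_x : [d] → [0,1] with Σ_x Λ_x(i) = 1 for all i. Let q be any probability distribution on [d] whose support contains the supports of all p_x. Then for every α > 1, min_x [ −ln Σ_i Λ_x(i) p_x(i) ] ≤ max_x D_α(q‖p_x) + (α/(α−1)) ln r, where D_α(q‖p_x) = (1/(α−1)) ln Σ_i q(i)^α p_x(i)^(1−α) (interpreted as +∞ if supp(q) ⊄ supp(p_x)). -/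
open scoped BigOperators

/-- Classical Rényi divergence `D_α(q‖p)` of order `α`, valued in `EReal`, equal to `+∞` when
`supp q ⊄ supp p`. -/
noncomputable def renyiDivE {d : ℕ} (α : ℝ) (q p : Fin d → ℝ) : EReal :=
  if ∀ i, p i = 0 → q i = 0 then
    (((α - 1)⁻¹ * Real.log (∑ i, q i ^ α * p i ^ (1 - α)) : ℝ) : EReal)
  else ⊤

/-- One-shot converse for classical state exclusion: for distributions
`p_1,…,p_r` on `Fin d`, an `r`-outcome test `(Λ_x)_x`, and any distribution `q` whose support
contains the supports of all `p_x`, for every `α > 1`,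
`min_x [−ln Σ_i Λ_x(i) p_x(i)] ≤ max_x D_α(q‖p_x) + (α/(α−1)) ln r`. -/
theorem classical_oneshot_exclusion_converse
    {d r : ℕ} (hr : 0 < r) (p : Fin r → Fin d → ℝ) (q : Fin d → ℝ)
    (hp0 : ∀ x i, 0 ≤ p x i) (hp1 : ∀ x, ∑ i, p x i = 1)
    (hq0 : ∀ i, 0 ≤ q i) (hq1 : ∑ i, q i = 1)
    (hsupp : ∀ x i, q i = 0 → p x i = 0)
    (Λ : Fin r → Fin d → ℝ)
    (hΛ01 : ∀ x i, 0 ≤ Λ x i ∧ Λ x i ≤ 1)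
    (hΛsum : ∀ i, ∑ x, Λ x i = 1)
    (α : ℝ) (hα : 1 < α) :
    (⨅ x, ((-Real.log (∑ i, Λ x i * p x i) : ℝ) : EReal)) ≤
      (⨆ x, renyiDivE α q (p x)) + (((α / (α - 1)) * Real.log r : ℝ) : EReal) := by
  have hrpos : (0:ℝ) < r := Nat.cast_pos.2 hr
  have hαpos : (0:ℝ) < α := lt_trans one_pos hα
  have hα1 : (0:ℝ) < α - 1 := sub_pos.2 hα
  by_cases hdom : ∀ x, ∀ i, p x i = 0 → q i = 0
  · -- main case
    -- choose x₀ with ∑ Λ x₀ q ≥ 1/r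
    have havg : ∃ x : Fin r, (1:ℝ)/r ≤ ∑ i, Λ x i * q i := by
      by_contra hc
      push_neg at hc
      have h1 : ∑ x : Fin r, ∑ i, Λ x i * q i < ∑ x : Fin r, (1:ℝ)/r :=
        Finset.sum_lt_sum_of_nonempty (by simp [Finset.univ_nonempty_iff, ← Fin.pos_iff_nonempty, hr]) (fun x _ => hc x)
      rw [Finset.sum_comm] at h1
      simp only [← Finset.sum_mul, hΛsum, one_mul] at h1
      rw [hq1, Finset.sum_const, Finset.card_univ, Fintype.card_fin] at h1
      rw [nsmul_eq_mul, mul_one_div, div_self (ne_of_gt hrpos)] at h1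
      exact lt_irrefl _ h1
    obtain ⟨x₀, hx₀⟩ := havg
    set S : ℝ := ∑ i, Λ x₀ i * p x₀ i with hS
    set Q : ℝ := ∑ i, q i ^ α * p x₀ i ^ (1 - α) with hQ
    -- Hölder
    have hpq : (α/(α-1)).HolderConjugate α := by
      exact ((Real.holderConjugate_iff_eq_conjExponent hα).2 rfl).symm
    set f : Fin d → ℝ := fun i => (Λ x₀ i * p x₀ i) ^ ((α-1)/α) with hf
    set g : Fin d → ℝ := fun i => Λ x₀ i ^ (1/α) * (q i * p x₀ i ^ ((1-α)/α)) with hg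
    have hfg : ∀ i, Λ x₀ i * q i = f i * g i := by
      intro i
      rcases eq_or_lt_of_le (hp0 x₀ i) with hpi | hpi
      · have hqi : q i = 0 := hdom x₀ i hpi.symm
        simp [hf, hg, hqi, ← hpi, Real.zero_rpow (ne_of_gt (div_pos hα1 hαpos))]
      · have hΛ0 := (hΛ01 x₀ i).1
        simp only [hf, hg]
        rw [Real.mul_rpow hΛ0 (le_of_lt hpi)]
        rw [show (Λ x₀ i ^ ((α-1)/α) * p x₀ i ^ ((α-1)/α)) * (Λ x₀ i ^ (1/α) * (q i * p x₀ i ^ ((1-α)/α)))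
            = (Λ x₀ i ^ ((α-1)/α) * Λ x₀ i ^ (1/α)) * (p x₀ i ^ ((α-1)/α) * p x₀ i ^ ((1-α)/α)) * q i by ring]
        rw [← Real.rpow_add' hΛ0 (by rw [← add_div, sub_add_cancel]; exact div_ne_zero (ne_of_gt hαpos) (ne_of_gt hαpos)), ← Real.rpow_add hpi]
        rw [show (α-1)/α + 1/α = 1 by field_simp; ring, show (α-1)/α + (1-α)/α = 0 by ring]
        rw [Real.rpow_one, Real.rpow_zero]
        ring
    have hholder : ∑ i, Λ x₀ i * q i ≤
        (∑ i, |f i| ^ (α/(α-1))) ^ (1/(α/(α-1))) * (∑ i, |g i| ^ α) ^ (1/α) := by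
      calc ∑ i, Λ x₀ i * q i = ∑ i, f i * g i := by
            exact Finset.sum_congr rfl (fun i _ => hfg i)
        _ ≤ _ := Real.inner_le_Lp_mul_Lq Finset.univ f g hpq
    have hfS : ∑ i, |f i| ^ (α/(α-1)) = S := by
      refine Finset.sum_congr rfl (fun i _ => ?_)
      have h0 : 0 ≤ Λ x₀ i * p x₀ i := mul_nonneg (hΛ01 x₀ i).1 (hp0 x₀ i)
      rw [abs_of_nonneg (Real.rpow_nonneg h0 _), ← Real.rpow_mul h0,
        show (α-1)/α * (α/(α-1)) = 1 by field_simp, Real.rpow_one]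
    have hgQ : ∑ i, |g i| ^ α ≤ Q := by
      refine Finset.sum_le_sum (fun i _ => ?_)
      have hΛ0 := (hΛ01 x₀ i).1
      have hg0 : 0 ≤ g i := mul_nonneg (Real.rpow_nonneg hΛ0 _)
        (mul_nonneg (hq0 i) (Real.rpow_nonneg (hp0 x₀ i) _))
      rw [abs_of_nonneg hg0]
      have : g i ^ α = Λ x₀ i * (q i ^ α * (p x₀ i ^ ((1-α)/α)) ^ α) := by
        rw [Real.mul_rpow (Real.rpow_nonneg hΛ0 _)
            (mul_nonneg (hq0 i) (Real.rpow_nonneg (hp0 x₀ i) _)),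
          Real.mul_rpow (hq0 i) (Real.rpow_nonneg (hp0 x₀ i) _),
          ← Real.rpow_mul hΛ0, one_div, inv_mul_cancel₀ (ne_of_gt hαpos), Real.rpow_one]
      rw [this, ← Real.rpow_mul (hp0 x₀ i),
        show (1-α)/α * α = 1-α by field_simp]
      have hterm0 : 0 ≤ q i ^ α * p x₀ i ^ (1-α) :=
        mul_nonneg (Real.rpow_nonneg (hq0 i) _) (Real.rpow_nonneg (hp0 x₀ i) _)
      calc Λ x₀ i * (q i ^ α * p x₀ i ^ (1-α)) ≤ 1 * (q i ^ α * p x₀ i ^ (1-α)) :=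
            mul_le_mul_of_nonneg_right (hΛ01 x₀ i).2 hterm0
        _ = q i ^ α * p x₀ i ^ (1-α) := one_mul _
    -- combine
    have hQ0 : 0 ≤ Q := Finset.sum_nonneg (fun i _ =>
      mul_nonneg (Real.rpow_nonneg (hq0 i) _) (Real.rpow_nonneg (hp0 x₀ i) _))
    have hS0 : 0 ≤ S := Finset.sum_nonneg (fun i _ =>
      mul_nonneg (hΛ01 x₀ i).1 (hp0 x₀ i))
    have hg0' : 0 ≤ ∑ i, |g i| ^ α := Finset.sum_nonneg (fun i _ =>
      Real.rpow_nonneg (abs_nonneg _) _)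
    have hkey : 1/(r:ℝ) ≤ S ^ ((α-1)/α) * Q ^ (1/α) := by
      have h1 : (∑ i, |g i| ^ α) ^ (1/α) ≤ Q ^ (1/α) :=
        Real.rpow_le_rpow hg0' hgQ (by positivity)
      have h2 : (∑ i, |f i| ^ (α/(α-1))) ^ (1/(α/(α-1))) = S ^ ((α-1)/α) := by
        rw [hfS, one_div_div]
      calc 1/(r:ℝ) ≤ ∑ i, Λ x₀ i * q i := hx₀
        _ ≤ _ := hholder
        _ ≤ S ^ ((α-1)/α) * Q ^ (1/α) := by
            rw [h2]
            exact mul_le_mul_of_nonneg_left h1 (Real.rpow_nonneg hS0 _)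
    have hSpos : 0 < S := by
      rcases eq_or_lt_of_le hS0 with h | h
      · exfalso
        rw [← h, Real.zero_rpow (by positivity : ((α-1)/α : ℝ) ≠ 0), zero_mul] at hkey
        have := one_div_pos.2 hrpos
        linarith
      · exact h
    have hQpos : 0 < Q := by
      rcases eq_or_lt_of_le hQ0 with h | h
      · exfalso
        rw [← h, Real.zero_rpow (by positivity : ((1:ℝ)/α : ℝ) ≠ 0), mul_zero] at hkey
        have := one_div_pos.2 hrpos
        linarith
      · exact h
    -- take logs
    have hlog : -Real.log r ≤ (α-1)/α * Real.log S + 1/α * Real.log Q := by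
      have := Real.log_le_log (one_div_pos.2 hrpos) hkey
      rw [Real.log_mul (ne_of_gt (Real.rpow_pos_of_pos hSpos _))
          (ne_of_gt (Real.rpow_pos_of_pos hQpos _)),
        Real.log_rpow hSpos, Real.log_rpow hQpos, one_div, Real.log_inv] at this
      linarith
    have hreal : -Real.log S ≤ (α-1)⁻¹ * Real.log Q + (α/(α-1)) * Real.log r := by
      have h2 : -(α * Real.log r) ≤ (α-1) * Real.log S + Real.log Q := by
        have := mul_le_mul_of_nonneg_left hlog (le_of_lt hαpos)
        have e1 : α * ((α-1)/α * Real.log S + 1/α * Real.log Q)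
            = (α-1) * Real.log S + Real.log Q := by field_simp
        rw [e1] at this
        linarith
      rw [show (α-1)⁻¹ * Real.log Q + (α/(α-1)) * Real.log r
          = (Real.log Q + α * Real.log r)/(α-1) by field_simp,
        le_div_iff₀ hα1]
      nlinarith
    -- transfer to EReal
    have hD : renyiDivE α q (p x₀) = (((α-1)⁻¹ * Real.log Q : ℝ) : EReal) := by
      simp only [renyiDivE, if_pos (hdom x₀)]
      rfl
    calc (⨅ x, ((-Real.log (∑ i, Λ x i * p x i) : ℝ) : EReal))
        ≤ ((-Real.log S : ℝ) : EReal) := iInf_le _ x₀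
      _ ≤ (((α-1)⁻¹ * Real.log Q + (α/(α-1)) * Real.log r : ℝ) : EReal) :=
          EReal.coe_le_coe_iff.2 hreal
      _ = (((α-1)⁻¹ * Real.log Q : ℝ) : EReal) + (((α/(α-1)) * Real.log r : ℝ) : EReal) := by
          rw [← EReal.coe_add]
      _ ≤ (⨆ x, renyiDivE α q (p x)) + (((α/(α-1)) * Real.log r : ℝ) : EReal) := by
          gcongr
          rw [← hD]
          exact le_iSup (fun x => renyiDivE α q (p x)) x₀
  · -- trivial case: some divergence is ⊤
    push_neg at hdom
    obtain ⟨x, hx⟩ := hdom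
    have hx' : ¬ ∀ i, p x i = 0 → q i = 0 := by push_neg; exact hx
    have htop : renyiDivE α q (p x) = ⊤ := by
      simp only [renyiDivE, if_neg hx']
    have : (⨆ x, renyiDivE α q (p x)) = ⊤ :=
      top_unique (htop ▸ le_iSup (fun x => renyiDivE α q (p x)) x)
    rw [this, EReal.top_add_coe]
    exact le_top
end

section
/- Let q, p_1, …, p_r be probability distributions on a finite set [d] such that for every x, D(q‖p_x) < r_x, where D is the Kullback–Leibler divergence and r_1,…,r_r are nonnegative reals. Suppose (Λ^(n)_1, …, Λ^(n)_r) is, for each n, an r-outcome test on [d]^n (i.e., Λ^(n)_x : [d]^n → [0,1] with Σ_x Λ^(n)_x = 1 pointwise) satisfying liminf_{n→∞} −(1/n) ln( Σ_{i ∈ [d]^n} Λ^(n)_x(i) p_x^n(i) ) > D(q‖p_x) for every x ∈ [r], where p_x^n is the n-fold product of p_x. Then a contradiction follows; equivalently, for any such sequence of tests, min_x liminf_{n→∞} −(1/n) ln( Σ_i Λ^(n)_x(i) p_x^n(i) ) ≤ max_x D(q‖p_x). -/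
open Filter Finset Real

private lemma sum_pi_prod {n d : ℕ} (h : Fin n → Fin d → ℝ) :
    ∑ i : Fin n → Fin d, ∏ k, h k (i k) = ∏ k, ∑ j, h k j := by
  rw [Finset.prod_univ_sum, Fintype.piFinset_univ]

private lemma prod_meas_sum {d : ℕ} {q : Fin d → ℝ} (hq1 : ∑ i, q i = 1) (n : ℕ) :
    ∑ i : Fin n → Fin d, ∏ k, q (i k) = 1 := by
  rw [sum_pi_prod (fun _ j => q j)]
  simp [hq1]

private lemma second_moment {d : ℕ} {q g : Fin d → ℝ} (hq1 : ∑ i, q i = 1)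
    (hg : ∑ j, q j * g j = 0) (n : ℕ) :
    ∑ i : Fin n → Fin d, (∏ k, q (i k)) * ((∑ k, g (i k)) * (∑ k, g (i k)))
      = n * ∑ j, q j * (g j * g j) := by
  have key : ∀ k l : Fin n,
      (∑ i : Fin n → Fin d, (∏ m, q (i m)) * (g (i k) * g (i l)))
        = if k = l then ∑ j, q j * (g j * g j) else 0 := by
    intro k l
    have h1 : ∀ i : Fin n → Fin d,
        (∏ m, q (i m)) * (g (i k) * g (i l))
          = ∏ m, (q (i m) * (if m = k then g (i m) else 1) * (if m = l then g (i m) else 1)) := by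
      intro i
      rw [Finset.prod_mul_distrib, Finset.prod_mul_distrib,
        Finset.prod_ite_eq' Finset.univ k (fun m => g (i m)),
        Finset.prod_ite_eq' Finset.univ l (fun m => g (i m))]
      simp only [Finset.mem_univ, if_true]
      ring
    rw [Finset.sum_congr rfl (fun i _ => h1 i),
      sum_pi_prod (fun m j => q j * (if m = k then g j else 1) * (if m = l then g j else 1))]
    by_cases hkl : k = l
    · subst hkl
      rw [if_pos rfl]
      have hfac : ∀ m : Fin n,
          (∑ j, q j * (if m = k then g j else 1) * (if m = k then g j else 1))
            = if m = k then (∑ j, q j * (g j * g j)) else 1 := by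
        intro m
        by_cases h : m = k
        · simp [h, mul_assoc]
        · simp [h, hq1]
      rw [Finset.prod_congr rfl (fun m _ => hfac m), Finset.prod_ite_eq' Finset.univ k _]
      simp
    · rw [if_neg hkl]
      apply Finset.prod_eq_zero (Finset.mem_univ k)
      simp [hkl, hg]
  have expand : ∀ i : Fin n → Fin d,
      (∏ k, q (i k)) * ((∑ k, g (i k)) * (∑ k, g (i k)))
        = ∑ k, ∑ l, (∏ m, q (i m)) * (g (i k) * g (i l)) := by
    intro i
    rw [Finset.sum_mul_sum, Finset.mul_sum]
    exact Finset.sum_congr rfl fun k _ => by rw [Finset.mul_sum]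
  rw [Finset.sum_congr rfl fun i _ => expand i, Finset.sum_comm]
  have hswap : ∀ k : Fin n,
      ∑ i : Fin n → Fin d, ∑ l, (∏ m, q (i m)) * (g (i k) * g (i l))
        = ∑ l, if k = l then ∑ j, q j * (g j * g j) else 0 := by
    intro k
    rw [Finset.sum_comm]
    exact Finset.sum_congr rfl fun l _ => key k l
  rw [Finset.sum_congr rfl fun k _ => hswap k]
  simp [Finset.sum_ite_eq]

private lemma strong_converse {d : ℕ} {q p : Fin d → ℝ}
    (hq0 : ∀ i, 0 ≤ q i) (hq1 : ∑ i, q i = 1)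
    (hp0 : ∀ i, 0 ≤ p i) (hp1 : ∑ i, p i = 1)
    (hsupp : ∀ i, p i = 0 → q i = 0)
    (Λ : (n : ℕ) → (Fin n → Fin d) → ℝ)
    (hΛ0 : ∀ n i, 0 ≤ Λ n i) (hΛ1 : ∀ n i, Λ n i ≤ 1)
    (hexp : (∑ i, q i * Real.log (q i / p i)) <
      Filter.liminf (fun n : ℕ =>
        -(1 / (n : ℝ)) * Real.log (∑ i : Fin n → Fin d, Λ n i * ∏ k, p (i k))) Filter.atTop) :
    Filter.Tendsto (fun n : ℕ => ∑ i : Fin n → Fin d, Λ n i * ∏ k, q (i k))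
      Filter.atTop (nhds 0) := by
  set D : ℝ := ∑ i, q i * Real.log (q i / p i) with hDdef
  set f : Fin d → ℝ := fun j => Real.log (q j / p j) with hfdef
  set g : Fin d → ℝ := fun j => f j - D with hgdef
  have hg : ∑ j, q j * g j = 0 := by
    simp only [hgdef, mul_sub, Finset.sum_sub_distrib]
    rw [← Finset.sum_mul, hq1, one_mul]
    simp [hDdef, hfdef]
  set V : ℝ := ∑ j, q j * (g j * g j) with hVdef
  have hV0 : 0 ≤ V :=
    Finset.sum_nonneg fun j _ => mul_nonneg (hq0 j) (mul_self_nonneg _)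
  set β : ℕ → ℝ := fun n => ∑ i : Fin n → Fin d, Λ n i * ∏ k, p (i k) with hβdef
  set α : ℕ → ℝ := fun n => ∑ i : Fin n → Fin d, Λ n i * ∏ k, q (i k) with hαdef
  have hβ0 : ∀ n, 0 ≤ β n := fun n =>
    Finset.sum_nonneg fun i _ => mul_nonneg (hΛ0 n i)
      (Finset.prod_nonneg fun k _ => hp0 _)
  have hβ1 : ∀ n, β n ≤ 1 := by
    intro n
    calc β n ≤ ∑ i : Fin n → Fin d, ∏ k, p (i k) :=
          Finset.sum_le_sum fun i _ =>
            mul_le_of_le_one_left (Finset.prod_nonneg fun k _ => hp0 _) (hΛ1 n i)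
      _ = 1 := prod_meas_sum hp1 n
  have hα0 : ∀ n, 0 ≤ α n := fun n =>
    Finset.sum_nonneg fun i _ => mul_nonneg (hΛ0 n i)
      (Finset.prod_nonneg fun k _ => hq0 _)
  set u : ℕ → ℝ := fun n => -(1 / (n : ℝ)) * Real.log (β n) with hudef
  have hu0 : ∀ n, 0 ≤ u n := by
    intro n
    have h1 : u n = (1 / (n : ℝ)) * (-(Real.log (β n))) := by
      simp only [hudef]; ring
    rw [h1]
    exact mul_nonneg (by positivity) (neg_nonneg.2 (Real.log_nonpos (hβ0 n) (hβ1 n)))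
  set L : ℝ := Filter.liminf u Filter.atTop with hLdef
  have hDL : D < L := hexp
  set δ : ℝ := (L - D) / 4 with hδdef
  have hδ0 : 0 < δ := by simp [hδdef]; linarith
  set c : ℝ := D + 2 * δ with hcdef
  set t : ℝ := D + δ with htdef
  have hcL : c < L := by simp [hcdef, hδdef]; linarith
  have hev : ∀ᶠ n in Filter.atTop, c < u n :=
    Filter.eventually_lt_of_lt_liminf hcL
      (Filter.isBoundedUnder_of ⟨0, fun n => hu0 n⟩)
  -- main eventual bound
  have hbound : ∀ᶠ n in Filter.atTop,
      α n ≤ Real.exp (-(δ * n)) + (V / (δ * δ)) * (1 / n) := by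
    filter_upwards [hev, Filter.eventually_ge_atTop 1] with n hc hn1
    have hn0 : (0 : ℝ) < n := by exact_mod_cast hn1
    -- β n ≤ exp (-(c * n))
    have hβc : β n ≤ Real.exp (-(c * n)) := by
      rcases eq_or_lt_of_le (hβ0 n) with h0 | h0
      · rw [← h0]; exact (Real.exp_pos _).le
      · have h1 : -(1 / (n : ℝ)) * Real.log (β n) = (-Real.log (β n)) / n := by ring
        rw [hudef] at hc
        simp only [h1] at hc
        have h2 : c * n < -Real.log (β n) := (lt_div_iff₀ hn0).1 hc
        have h3 : Real.log (β n) < -(c * n) := by linarith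
        calc β n = Real.exp (Real.log (β n)) := (Real.exp_log h0).symm
          _ ≤ Real.exp (-(c * n)) := Real.exp_le_exp.2 h3.le
    set T : Finset (Fin n → Fin d) :=
      Finset.univ.filter (fun i => ∑ k, f (i k) ≤ n * t) with hTdef
    -- pointwise change of measure on T
    have hpoint : ∀ i : Fin n → Fin d, (∑ k, f (i k)) ≤ n * t →
        ∏ k, q (i k) ≤ Real.exp (n * t) * ∏ k, p (i k) := by
      intro i hi
      by_cases hz : ∃ k, q (i k) = 0
      · obtain ⟨k, hk⟩ := hz
        rw [Finset.prod_eq_zero (Finset.mem_univ k) hk]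
        exact mul_nonneg (Real.exp_pos _).le (Finset.prod_nonneg fun k _ => hp0 _)
      · push_neg at hz
        have hqpos : ∀ k, 0 < q (i k) := fun k => (hq0 _).lt_of_ne (fun h => hz k h.symm)
        have hppos : ∀ k, 0 < p (i k) := fun k =>
          (hp0 _).lt_of_ne (fun h => hz k (hsupp _ h.symm) )
        have hq_eq : ∏ k, q (i k) = Real.exp (∑ k, Real.log (q (i k))) := by
          rw [Real.exp_sum]
          exact Finset.prod_congr rfl fun k _ => (Real.exp_log (hqpos k)).symm
        have hp_eq : ∏ k, p (i k) = Real.exp (∑ k, Real.log (p (i k))) := by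
          rw [Real.exp_sum]
          exact Finset.prod_congr rfl fun k _ => (Real.exp_log (hppos k)).symm
        have hsum : ∑ k, Real.log (q (i k))
            = (∑ k, f (i k)) + ∑ k, Real.log (p (i k)) := by
          rw [← Finset.sum_add_distrib]
          refine Finset.sum_congr rfl fun k _ => ?_
          simp only [hfdef]
          rw [Real.log_div (ne_of_gt (hqpos k)) (ne_of_gt (hppos k))]
          ring
        rw [hq_eq, hsum, Real.exp_add, hp_eq]
        exact mul_le_mul_of_nonneg_right (Real.exp_le_exp.2 hi) (Real.exp_pos _).le
    -- split
    have hsplit : α n = (∑ i ∈ T, Λ n i * ∏ k, q (i k))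
        + ∑ i ∈ Finset.univ.filter (fun i => ¬ (∑ k, f (i k) ≤ n * t)),
            Λ n i * ∏ k, q (i k) := by
      rw [hαdef, hTdef]
      exact (Finset.sum_filter_add_sum_filter_not Finset.univ _ _).symm
    -- bound on T
    have hT1 : (∑ i ∈ T, Λ n i * ∏ k, q (i k)) ≤ Real.exp (-(δ * n)) := by
      have step1 : (∑ i ∈ T, Λ n i * ∏ k, q (i k))
          ≤ ∑ i ∈ T, Real.exp (n * t) * (Λ n i * ∏ k, p (i k)) := by
        refine Finset.sum_le_sum fun i hi => ?_
        have hiT : (∑ k, f (i k)) ≤ n * t := (Finset.mem_filter.1 hi).2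
        calc Λ n i * ∏ k, q (i k)
            ≤ Λ n i * (Real.exp (n * t) * ∏ k, p (i k)) :=
              mul_le_mul_of_nonneg_left (hpoint i hiT) (hΛ0 n i)
          _ = Real.exp (n * t) * (Λ n i * ∏ k, p (i k)) := by ring
      have step2 : ∑ i ∈ T, Real.exp (n * t) * (Λ n i * ∏ k, p (i k))
          ≤ Real.exp (n * t) * β n := by
        rw [← Finset.mul_sum]
        refine mul_le_mul_of_nonneg_left ?_ (Real.exp_pos _).le
        refine Finset.sum_le_sum_of_subset_of_nonneg (Finset.filter_subset _ _)
          fun i _ _ => mul_nonneg (hΛ0 n i) (Finset.prod_nonneg fun k _ => hp0 _)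
      have step3 : Real.exp (n * t) * β n ≤ Real.exp (-(δ * n)) := by
        calc Real.exp (n * t) * β n ≤ Real.exp (n * t) * Real.exp (-(c * n)) :=
              mul_le_mul_of_nonneg_left hβc (Real.exp_pos _).le
          _ = Real.exp (n * t + -(c * n)) := (Real.exp_add _ _).symm
          _ = Real.exp (-(δ * n)) := by
              congr 1
              rw [htdef, hcdef]; ring
      linarith [step1, step2, step3]
    -- Chebyshev bound off T
    have hcheb : (∑ i ∈ Finset.univ.filter (fun i => ¬ (∑ k, f (i k) ≤ n * t)),
        Λ n i * ∏ k, q (i k)) ≤ (V / (δ * δ)) * (1 / n) := by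
      set Tc := Finset.univ.filter (fun i : Fin n → Fin d => ¬ (∑ k, f (i k) ≤ n * t)) with hTc
      have hstep1 : (∑ i ∈ Tc, Λ n i * ∏ k, q (i k)) ≤ ∑ i ∈ Tc, ∏ k, q (i k) :=
        Finset.sum_le_sum fun i _ =>
          mul_le_of_le_one_left (Finset.prod_nonneg fun k _ => hq0 _) (hΛ1 n i)
      have hgsum : ∀ i : Fin n → Fin d, (∑ k, g (i k)) = (∑ k, f (i k)) - n * D := by
        intro i
        simp [hgdef, Finset.sum_sub_distrib, Finset.sum_const, Finset.card_univ,
          nsmul_eq_mul]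
      have hkey : ∀ i ∈ Tc, (n * δ) * (n * δ) * ∏ k, q (i k)
          ≤ (∏ k, q (i k)) * ((∑ k, g (i k)) * (∑ k, g (i k))) := by
        intro i hi
        have hiT : n * t < ∑ k, f (i k) := by
          have := (Finset.mem_filter.1 hi).2
          exact lt_of_not_ge this
        have h1 : n * δ ≤ ∑ k, g (i k) := by
          rw [hgsum i, htdef] at *
          nlinarith [hiT]
        have h2 : (n * δ) * (n * δ) ≤ (∑ k, g (i k)) * (∑ k, g (i k)) :=
          mul_self_le_mul_self (by positivity) h1
        calc (n * δ) * (n * δ) * ∏ k, q (i k)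
            ≤ ((∑ k, g (i k)) * (∑ k, g (i k))) * ∏ k, q (i k) :=
              mul_le_mul_of_nonneg_right h2 (Finset.prod_nonneg fun k _ => hq0 _)
          _ = (∏ k, q (i k)) * ((∑ k, g (i k)) * (∑ k, g (i k))) := by ring
      have hstep2 : (n * δ) * (n * δ) * ∑ i ∈ Tc, ∏ k, q (i k) ≤ n * V := by
        calc (n * δ) * (n * δ) * ∑ i ∈ Tc, ∏ k, q (i k)
            = ∑ i ∈ Tc, (n * δ) * (n * δ) * ∏ k, q (i k) := Finset.mul_sum _ _ _
          _ ≤ ∑ i ∈ Tc, (∏ k, q (i k)) * ((∑ k, g (i k)) * (∑ k, g (i k))) :=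
              Finset.sum_le_sum hkey
          _ ≤ ∑ i : Fin n → Fin d, (∏ k, q (i k)) * ((∑ k, g (i k)) * (∑ k, g (i k))) :=
              Finset.sum_le_sum_of_subset_of_nonneg (Finset.filter_subset _ _)
                fun i _ _ => mul_nonneg (Finset.prod_nonneg fun k _ => hq0 _)
                  (mul_self_nonneg _)
          _ = n * V := second_moment hq1 hg n
      have hpos : 0 < (n * δ) * (n * δ) := by positivity
      have hstep3 : ∑ i ∈ Tc, ∏ k, q (i k) ≤ (V / (δ * δ)) * (1 / n) := by
        rw [show (V / (δ * δ)) * (1 / (n:ℝ)) = (n * V) / ((n * δ) * (n * δ)) by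
          field_simp]
        rw [le_div_iff₀ hpos]
        linarith [hstep2]
      linarith [hstep1, hstep3]
    rw [hsplit]
    linarith [hT1, hcheb]
  -- squeeze
  have hlim : Filter.Tendsto (fun n : ℕ => Real.exp (-(δ * n)) + (V / (δ * δ)) * (1 / n))
      Filter.atTop (nhds 0) := by
    have ha : Filter.Tendsto (fun n : ℕ => Real.exp (-(δ * n))) Filter.atTop (nhds 0) := by
      apply Real.tendsto_exp_atBot.comp
      have h : Filter.Tendsto (fun n : ℕ => δ * n) Filter.atTop Filter.atTop :=
        (tendsto_natCast_atTop_atTop (R := ℝ)).const_mul_atTop hδ0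
      exact Filter.tendsto_neg_atTop_atBot.comp h
    have hb : Filter.Tendsto (fun n : ℕ => (V / (δ * δ)) * (1 / n)) Filter.atTop (nhds 0) := by
      have := tendsto_one_div_atTop_nhds_zero_nat.const_mul (V / (δ * δ))
      simpa using this
    simpa using ha.add hb
  exact tendsto_of_tendsto_of_tendsto_of_le_of_le' tendsto_const_nhds hlim
    (Filter.Eventually.of_forall hα0) hbound


/-- Classical divergence-radius converse for state exclusion: if `q, p_x`
are distributions on `Fin d` with `D(q‖p_x)` finite (`supp q ⊆ supp p_x`), and
`(Λ⁽ⁿ⁾_x)_x` is for each `n` an `r`-outcome test on `(Fin d)ⁿ` whose error exponents satisfy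
`liminf −(1/n) ln Σ_i Λ⁽ⁿ⁾_x(i) p_x^n(i) > D(q‖p_x)` for every `x`, then a contradiction
follows. -/
theorem classical_divergence_radius_contradiction
    {d r : ℕ} (q : Fin d → ℝ) (p : Fin r → Fin d → ℝ)
    (hq0 : ∀ i, 0 ≤ q i) (hq1 : ∑ i, q i = 1)
    (hp0 : ∀ x i, 0 ≤ p x i) (hp1 : ∀ x, ∑ i, p x i = 1)
    (hsupp : ∀ x i, p x i = 0 → q i = 0)
    (rr : Fin r → ℝ) (hrr : ∀ x, 0 ≤ rr x)
    (hD : ∀ x, (∑ i, q i * Real.log (q i / p x i)) < rr x)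
    (Λ : (n : ℕ) → Fin r → ((Fin n → Fin d) → ℝ))
    (hΛ01 : ∀ n x i, 0 ≤ Λ n x i ∧ Λ n x i ≤ 1)
    (hΛsum : ∀ n i, ∑ x, Λ n x i = 1)
    (hexp : ∀ x,
      (∑ i, q i * Real.log (q i / p x i)) <
        Filter.liminf
          (fun n : ℕ =>
            -(1 / (n : ℝ)) * Real.log (∑ i : Fin n → Fin d, Λ n x i * ∏ k, p x (i k)))
          Filter.atTop) :
    False := by
  have hten : ∀ x : Fin r,
      Filter.Tendsto (fun n : ℕ => ∑ i : Fin n → Fin d, Λ n x i * ∏ k, q (i k))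
        Filter.atTop (nhds 0) := fun x =>
    strong_converse hq0 hq1 (hp0 x) (hp1 x) (hsupp x) (fun n => Λ n x)
      (fun n i => (hΛ01 n x i).1) (fun n i => (hΛ01 n x i).2) (hexp x)
  have hsum : ∀ n : ℕ, ∑ x, ∑ i : Fin n → Fin d, Λ n x i * ∏ k, q (i k) = 1 := by
    intro n
    rw [Finset.sum_comm]
    calc ∑ i : Fin n → Fin d, ∑ x, Λ n x i * ∏ k, q (i k)
        = ∑ i : Fin n → Fin d, ∏ k, q (i k) := by
          refine Finset.sum_congr rfl fun i _ => ?_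
          rw [← Finset.sum_mul, hΛsum n i, one_mul]
      _ = 1 := prod_meas_sum hq1 n
  have hzero : Filter.Tendsto
      (fun n : ℕ => ∑ x, ∑ i : Fin n → Fin d, Λ n x i * ∏ k, q (i k))
      Filter.atTop (nhds 0) := by
    have := tendsto_finset_sum Finset.univ (fun x (_ : x ∈ Finset.univ) => hten x)
    simpa using this
  have hone : Filter.Tendsto
      (fun n : ℕ => ∑ x, ∑ i : Fin n → Fin d, Λ n x i * ∏ k, q (i k))
      Filter.atTop (nhds 1) := by
    rw [show (fun n : ℕ => ∑ x, ∑ i : Fin n → Fin d, Λ n x i * ∏ k, q (i k))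
        = fun _ : ℕ => (1 : ℝ) from funext hsum]
    exact tendsto_const_nhds
  exact one_ne_zero (tendsto_nhds_unique hone hzero)
end

section
/- Strong converse of the classical Stein's lemma (qualitative form): let p, q be probability distributions on a finite set [d] with supp(q) ⊆ supp(p), and let (Λ^(n))_n be a sequence of functions Λ^(n) : [d]^n → [0,1]. If liminf_{n→∞} −(1/n) ln Σ_{i∈[d]^n} Λ^(n)(i) p^n(i) > D(q‖p), then lim_{n→∞} Σ_{i∈[d]^n} Λ^(n)(i) q^n(i) = 0. -/
open Finset Real Filter


/-- product-of-sums identity for i.i.d. sums. -/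
lemma stein_prod_sum_aux {d : ℕ} (n : ℕ) (h : Fin d → ℝ) :
    ∑ i : Fin n → Fin d, ∏ k, h (i k) = (∑ j, h j) ^ n := by
  have : ((∑ j, h j) ^ n) = ∏ _k : Fin n, ∑ j, h j := by
    simp [Finset.prod_const]
  rw [this, Finset.prod_univ_sum, Fintype.piFinset_univ]

/-- One-shot Hölder bound. -/
lemma stein_hoelder_aux {ι : Type*} [Fintype ι] (Λ P Q : ι → ℝ)
    (hΛ0 : ∀ i, 0 ≤ Λ i) (hΛ1 : ∀ i, Λ i ≤ 1)
    (hP : ∀ i, 0 ≤ P i) (hQ : ∀ i, 0 ≤ Q i)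
    (hPQ : ∀ i, P i = 0 → Q i = 0) {t : ℝ} (ht : 0 < t) :
    ∑ i, Λ i * Q i ≤
      (∑ i, Λ i * P i) ^ (t / (1 + t)) *
        (∑ i, Q i ^ (1 + t) * P i ^ (-t)) ^ (1 / (1 + t)) := by
  have ht1 : (0:ℝ) < 1 + t := by linarith
  set a : ℝ := t / (1 + t) with ha
  set b : ℝ := 1 / (1 + t) with hb
  have hab : a + b = 1 := by rw [ha, hb]; field_simp; ring
  have ha0 : 0 < a := div_pos ht ht1
  have hb0 : 0 < b := div_pos one_pos ht1
  set f : ι → ℝ := fun i => (Λ i * P i) ^ a with hf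
  set g : ι → ℝ := fun i => Λ i ^ b * (Q i * P i ^ (-a)) with hg
  have hfnn : ∀ i, 0 ≤ f i := fun i => Real.rpow_nonneg (mul_nonneg (hΛ0 i) (hP i)) _
  have hgnn : ∀ i, 0 ≤ g i := fun i =>
    mul_nonneg (Real.rpow_nonneg (hΛ0 i) _)
      (mul_nonneg (hQ i) (Real.rpow_nonneg (hP i) _))
  have key : ∀ i, Λ i * Q i = f i * g i := by
    intro i
    rcases eq_or_lt_of_le (hP i) with h0 | hpos
    · have hq0 : Q i = 0 := hPQ i h0.symm
      simp [hf, hg, hq0]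
    · have hΛP : (Λ i * P i) ^ a = Λ i ^ a * P i ^ a :=
        Real.mul_rpow (hΛ0 i) (hP i)
      have hΛa : Λ i ^ a * Λ i ^ b = Λ i := by
        rw [← Real.rpow_add' (hΛ0 i) (by rw [hab]; norm_num), hab, Real.rpow_one]
      have hPa : P i ^ a * P i ^ (-a) = 1 := by
        rw [← Real.rpow_add hpos, add_neg_cancel, Real.rpow_zero]
      show Λ i * Q i = (Λ i * P i) ^ a * (Λ i ^ b * (Q i * P i ^ (-a)))
      calc Λ i * Q i = (Λ i ^ a * Λ i ^ b) * ((P i ^ a * P i ^ (-a)) * Q i) := by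
            rw [hΛa, hPa]; ring
        _ = (Λ i * P i) ^ a * (Λ i ^ b * (Q i * P i ^ (-a))) := by rw [hΛP]; ring
  have hconj : Real.HolderConjugate (1 / a) (1 + t) := by
    rw [Real.holderConjugate_iff]; constructor
    · rw [lt_div_iff₀ ha0, one_mul, ha, div_lt_one ht1]; linarith
    · rw [ha]; field_simp; ring
  have hoelder := Real.inner_le_Lp_mul_Lq Finset.univ f g hconj
  have hfp : ∀ i, |f i| ^ (1 / a) = Λ i * P i := by
    intro i
    rw [abs_of_nonneg (hfnn i), hf, ← Real.rpow_mul (mul_nonneg (hΛ0 i) (hP i)),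
      mul_one_div_cancel ha0.ne', Real.rpow_one]
  have hgp : ∀ i, |g i| ^ (1 + t) = Λ i * (Q i ^ (1 + t) * P i ^ (-t)) := by
    intro i
    rw [abs_of_nonneg (hgnn i), hg,
      Real.mul_rpow (Real.rpow_nonneg (hΛ0 i) _)
        (mul_nonneg (hQ i) (Real.rpow_nonneg (hP i) _)),
      Real.mul_rpow (hQ i) (Real.rpow_nonneg (hP i) _),
      ← Real.rpow_mul (hΛ0 i), ← Real.rpow_mul (hP i)]
    have hb1 : b * (1 + t) = 1 := by rw [hb]; field_simp
    have ha1 : -a * (1 + t) = -t := by rw [ha]; field_simp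
    rw [hb1, ha1, Real.rpow_one]
  have hsum1 : ∑ i, |f i| ^ (1 / a) = ∑ i, Λ i * P i :=
    Finset.sum_congr rfl fun i _ => hfp i
  have hsum2 : ∑ i, |g i| ^ (1 + t) ≤ ∑ i, Q i ^ (1 + t) * P i ^ (-t) := by
    refine Finset.sum_le_sum fun i _ => ?_
    rw [hgp i]
    have hz : 0 ≤ Q i ^ (1 + t) * P i ^ (-t) :=
      mul_nonneg (Real.rpow_nonneg (hQ i) _) (Real.rpow_nonneg (hP i) _)
    calc Λ i * (Q i ^ (1 + t) * P i ^ (-t)) ≤ 1 * (Q i ^ (1 + t) * P i ^ (-t)) :=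
          mul_le_mul_of_nonneg_right (hΛ1 i) hz
      _ = _ := one_mul _
  calc ∑ i, Λ i * Q i = ∑ i, f i * g i := Finset.sum_congr rfl fun i _ => key i
    _ ≤ (∑ i, |f i| ^ (1 / a)) ^ (1 / (1 / a)) * (∑ i, |g i| ^ (1 + t)) ^ (1 / (1 + t)) :=
        hoelder
    _ = (∑ i, Λ i * P i) ^ a * (∑ i, |g i| ^ (1 + t)) ^ (1 / (1 + t)) := by
        rw [hsum1, one_div_one_div]
    _ ≤ (∑ i, Λ i * P i) ^ a * (∑ i, Q i ^ (1 + t) * P i ^ (-t)) ^ (1 / (1 + t)) := by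
        refine mul_le_mul_of_nonneg_left ?_
          (Real.rpow_nonneg (Finset.sum_nonneg fun i _ =>
            mul_nonneg (hΛ0 i) (hP i)) _)
        exact Real.rpow_le_rpow (Finset.sum_nonneg fun i _ =>
          Real.rpow_nonneg (abs_nonneg _) _) hsum2 hb0.le



/-- Strong converse of the classical Stein's lemma (qualitative form):
for distributions `p, q` on `Fin d` with `supp q ⊆ supp p` and a sequence of tests
`Λ⁽ⁿ⁾ : (Fin d)ⁿ → [0,1]`, if `liminf −(1/n) ln Σ Λ⁽ⁿ⁾ p^n > D(q‖p)`, then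
`Σ Λ⁽ⁿ⁾ q^n → 0`. -/
theorem classical_stein_strong_converse
    {d : ℕ} (p q : Fin d → ℝ)
    (hp0 : ∀ i, 0 ≤ p i) (hp1 : ∑ i, p i = 1)
    (hq0 : ∀ i, 0 ≤ q i) (hq1 : ∑ i, q i = 1)
    (hsupp : ∀ i, p i = 0 → q i = 0)
    (Λ : (n : ℕ) → ((Fin n → Fin d) → ℝ))
    (hΛ : ∀ n i, 0 ≤ Λ n i ∧ Λ n i ≤ 1)
    (hliminf :
      (∑ i, q i * Real.log (q i / p i)) <
        Filter.liminf
          (fun n : ℕ => -(1 / (n : ℝ)) * Real.log (∑ i : Fin n → Fin d, Λ n i * ∏ k, p (i k)))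
          Filter.atTop) :
    Filter.Tendsto (fun n : ℕ => ∑ i : Fin n → Fin d, Λ n i * ∏ k, q (i k))
      Filter.atTop (nhds 0) := by
  classical
  set D : ℝ := ∑ i, q i * Real.log (q i / p i) with hD
  set x : Fin d → ℝ := fun i => Real.log (q i / p i) with hx
  set G : ℝ → ℝ := fun t => ∑ i, q i * Real.exp (t * x i) with hG
  have hqpos : ∀ i, q i ≠ 0 → 0 < p i := by
    intro i hqi
    rcases eq_or_lt_of_le (hp0 i) with h0 | h; · exact absurd (hsupp i h0.symm) hqi
    · exact h
  have hG0 : G 0 = 1 := by simp [hG, hq1]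
  have hGpos : ∀ t, 0 < G t := by
    intro t
    obtain ⟨j, _, hj⟩ : ∃ j ∈ Finset.univ, q j ≠ 0 :=
      Finset.exists_ne_zero_of_sum_ne_zero (by rw [hq1]; norm_num)
    refine Finset.sum_pos' (fun i _ => mul_nonneg (hq0 i) (Real.exp_pos _).le) ⟨j, Finset.mem_univ j, ?_⟩
    exact mul_pos ((hq0 j).lt_of_ne (Ne.symm hj)) (Real.exp_pos _)
  have hGder : HasDerivAt G D 0 := by
    have : HasDerivAt G (∑ i, q i * (Real.exp (0 * x i) * x i)) 0 := by
      apply HasDerivAt.fun_sum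
      intro i _
      exact ((hasDerivAt_mul_const (x i)).exp).const_mul (q i)
    simpa [mul_comm] using this
  set F : ℝ → ℝ := fun t => Real.log (G t) with hF
  have hF0 : F 0 = 0 := by rw [hF]; simp [hG0]
  have hFder : HasDerivAt F D 0 := by
    have := hGder.log (hGpos 0).ne'
    simpa [hF, hG0] using this
  obtain ⟨L', hDL', hL'⟩ := exists_between hliminf
  -- find t > 0 with F t < L' * t
  have hslope : Filter.Tendsto (fun t => F t / t) (nhdsWithin 0 (Set.Ioi 0)) (nhds D) := by
    have h1 := hasDerivAt_iff_tendsto_slope.1 hFder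
    have h2 : nhdsWithin (0:ℝ) (Set.Ioi 0) ≤ nhdsWithin 0 {0}ᶜ :=
      nhdsWithin_mono 0 (fun y hy => ne_of_gt hy)
    have h3 := h1.mono_left h2
    refine h3.congr' ?_
    filter_upwards [self_mem_nhdsWithin] with y hy
    simp [slope_def_field, hF0]
  have hev : ∀ᶠ t in nhdsWithin (0:ℝ) (Set.Ioi 0), F t / t < L' :=
    hslope.eventually_lt_const hDL'
  obtain ⟨t, hft, ht0⟩ := (hev.and self_mem_nhdsWithin).exists
  have hFt : F t < L' * t := (div_lt_iff₀ ht0).1 hft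
  have ht1 : (0:ℝ) < 1 + t := by linarith
  set c : ℝ := (t * L' - F t) / (1 + t) with hc
  have hcpos : 0 < c := by
    apply div_pos _ ht1; nlinarith
  -- key identity: middle sum is (G t)^n
  have hGsum : ∑ j, q j ^ (1 + t) * p j ^ (-t) = G t := by
    refine Finset.sum_congr rfl fun j _ => ?_
    by_cases hqj : q j = 0
    · rw [hqj, Real.zero_rpow (by positivity), zero_mul, zero_mul]
    · have hqpos' : 0 < q j := (hq0 j).lt_of_ne (Ne.symm hqj)
      have hppos : 0 < p j := hqpos j hqj
      have h1 : q j ^ (1 + t) = q j * q j ^ t := by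
        rw [Real.rpow_add hqpos', Real.rpow_one]
      have h2 : Real.exp (t * x j) = q j ^ t * p j ^ (-t) := by
        rw [hx, mul_comm, ← Real.rpow_def_of_pos (div_pos hqpos' hppos),
          Real.div_rpow (hq0 j) (hp0 j), Real.rpow_neg (hp0 j), div_eq_mul_inv]
      rw [h1, h2]; ring
  -- the sums and bounds
  set Ps : ℕ → ℝ := fun n => ∑ i : Fin n → Fin d, Λ n i * ∏ k, p (i k) with hPs
  set Qs : ℕ → ℝ := fun n => ∑ i : Fin n → Fin d, Λ n i * ∏ k, q (i k) with hQs
  have hPs0 : ∀ n, 0 ≤ Ps n := fun n =>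
    Finset.sum_nonneg fun i _ => mul_nonneg (hΛ n i).1 (Finset.prod_nonneg fun k _ => hp0 _)
  have hQs0 : ∀ n, 0 ≤ Qs n := fun n =>
    Finset.sum_nonneg fun i _ => mul_nonneg (hΛ n i).1 (Finset.prod_nonneg fun k _ => hq0 _)
  have hPs1 : ∀ n, Ps n ≤ 1 := by
    intro n
    have : Ps n ≤ ∑ i : Fin n → Fin d, ∏ k, p (i k) := by
      refine Finset.sum_le_sum fun i _ => ?_
      have hz : 0 ≤ ∏ k, p (i k) := Finset.prod_nonneg fun k _ => hp0 _
      nlinarith [(hΛ n i).2]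
    rw [stein_prod_sum_aux n p, hp1, one_pow] at this
    exact this
  -- boundedness of the liminf sequence
  have hbdd : Filter.IsBoundedUnder (· ≥ ·) Filter.atTop
      (fun n : ℕ => -(1 / (n : ℝ)) * Real.log (Ps n)) := by
    refine Filter.isBoundedUnder_of ⟨0, fun n => ?_⟩
    have hlog : Real.log (Ps n) ≤ 0 := by
      rcases eq_or_lt_of_le (hPs0 n) with h0 | h0
      · rw [← h0, Real.log_zero]
      · exact Real.log_nonpos (hPs0 n) (hPs1 n)
    have h1 : (0:ℝ) ≤ 1 / (n:ℝ) := by positivity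
    nlinarith
  have hev2 : ∀ᶠ n : ℕ in Filter.atTop, L' < -(1 / (n : ℝ)) * Real.log (Ps n) :=
    Filter.eventually_lt_of_lt_liminf hL' hbdd
  -- main eventual bound
  have hbound : ∀ᶠ n : ℕ in Filter.atTop, Qs n ≤ Real.exp (-c * n) := by
    filter_upwards [hev2, Filter.eventually_ge_atTop 1] with n hn hn1
    have hnpos : (0:ℝ) < (n:ℝ) := by exact_mod_cast Nat.pos_of_ne_zero (by omega)
    -- P n ≤ exp(-n L')
    have hPexp : Ps n ≤ Real.exp (-(n:ℝ) * L') := by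
      rcases eq_or_lt_of_le (hPs0 n) with h0 | h0
      · rw [← h0]; exact (Real.exp_pos _).le
      · have hmul : (n:ℝ) * L' < (n:ℝ) * (-(1 / (n:ℝ)) * Real.log (Ps n)) :=
          (mul_lt_mul_iff_right₀ hnpos).2 hn
        have hsimp : (n:ℝ) * (-(1 / (n:ℝ)) * Real.log (Ps n)) = - Real.log (Ps n) := by
          field_simp
        rw [hsimp] at hmul
        have : Real.log (Ps n) < -(n:ℝ) * L' := by linarith
        calc Ps n = Real.exp (Real.log (Ps n)) := (Real.exp_log h0).symm
          _ ≤ Real.exp (-(n:ℝ) * L') := Real.exp_le_exp.2 this.le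
    -- Hölder bound
    have hH := stein_hoelder_aux (Λ n) (fun i => ∏ k, p (i k)) (fun i => ∏ k, q (i k))
      (fun i => (hΛ n i).1) (fun i => (hΛ n i).2)
      (fun i => Finset.prod_nonneg fun k _ => hp0 _)
      (fun i => Finset.prod_nonneg fun k _ => hq0 _)
      (fun i hi => by
        obtain ⟨k, _, hk⟩ := Finset.prod_eq_zero_iff.1 hi
        exact Finset.prod_eq_zero (Finset.mem_univ k) (hsupp _ hk)) ht0
    -- compute middle sum
    have hmid : ∑ i : Fin n → Fin d, (∏ k, q (i k)) ^ (1 + t) * (∏ k, p (i k)) ^ (-t)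
        = (G t) ^ n := by
      rw [← hGsum, ← stein_prod_sum_aux n (fun j => q j ^ (1 + t) * p j ^ (-t))]
      refine Finset.sum_congr rfl fun i _ => ?_
      rw [← Real.finset_prod_rpow _ _ (fun k _ => hq0 _) _,
        ← Real.finset_prod_rpow _ _ (fun k _ => hp0 _) _, ← Finset.prod_mul_distrib]
    rw [hmid] at hH
    have hGt : (0:ℝ) < G t := hGpos t
    have hGn : ((G t) ^ n : ℝ) ^ (1 / (1 + t)) = Real.exp (F t * ((n:ℝ) * (1 / (1 + t)))) := by
      rw [← Real.rpow_natCast (G t) n, ← Real.rpow_mul hGt.le,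
        Real.rpow_def_of_pos hGt]
    have hPn : (Ps n) ^ (t / (1 + t)) ≤ Real.exp (-(n:ℝ) * L' * (t / (1 + t))) := by
      calc (Ps n) ^ (t / (1 + t)) ≤ (Real.exp (-(n:ℝ) * L')) ^ (t / (1 + t)) :=
            Real.rpow_le_rpow (hPs0 n) hPexp (by positivity)
        _ = Real.exp (-(n:ℝ) * L' * (t / (1 + t))) := by
            rw [Real.rpow_def_of_pos (Real.exp_pos _), Real.log_exp]
    calc Qs n ≤ (Ps n) ^ (t / (1 + t)) * ((G t) ^ n : ℝ) ^ (1 / (1 + t)) := hH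
      _ ≤ Real.exp (-(n:ℝ) * L' * (t / (1 + t))) * Real.exp (F t * ((n:ℝ) * (1 / (1 + t)))) := by
          rw [hGn]
          exact mul_le_mul_of_nonneg_right hPn (Real.exp_pos _).le
      _ = Real.exp (-c * n) := by
          rw [← Real.exp_add]
          congr 1
          rw [hc]; ring
  -- conclude
  have hgeo : Filter.Tendsto (fun n : ℕ => Real.exp (-c * n)) Filter.atTop (nhds 0) := by
    have : ∀ n : ℕ, Real.exp (-c * n) = (Real.exp (-c)) ^ n := by
      intro n; rw [← Real.exp_nat_mul]; ring_nf
    simp_rw [this]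
    exact tendsto_pow_atTop_nhds_zero_of_lt_one (Real.exp_pos _).le
      (Real.exp_lt_one_iff.2 (neg_neg_iff_pos.2 hcpos))
  exact squeeze_zero' (Filter.Eventually.of_forall hQs0) hbound hgeo
end

section
/- Classical minimax identity for divergence radius: let p_1, …, p_r be probability distributions on a finite set [d] with ∩_x supp(p_x) ≠ ∅. Then inf_q max_x D(q‖p_x) = sup_{s ∈ P_r} inf_q Σ_x s_x D(q‖p_x), where q ranges over probability distributions on [d], D is the Kullback–Leibler divergence, and P_r is the simplex of probability vectors on [r]. -/
/-- Kullback–Leibler divergence `D(q‖p)`, valued in `EReal`, `+∞` when `supp q ⊄ supp p`. -/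
noncomputable def klDivE {d : ℕ} (q p : Fin d → ℝ) : EReal :=
  if ∀ i, p i = 0 → q i = 0 then ((∑ i, q i * Real.log (q i / p i) : ℝ) : EReal) else ⊤

/-- The simplex of probability distributions on `Fin d`. -/
def probSimplex (d : ℕ) : Set (Fin d → ℝ) :=
  {q | (∀ i, 0 ≤ q i) ∧ ∑ i, q i = 1}

namespace ClassicalDivRadius

open Finset Real

/-! ### Generic EReal helper lemmas -/

lemma ereal_coe_sum {ι : Type*} (t : Finset ι) (f : ι → ℝ) :
    ((∑ i ∈ t, f i : ℝ) : EReal) = ∑ i ∈ t, (f i : EReal) := by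
  classical
  induction t using Finset.induction with
  | empty => simp
  | @insert a u h ih => rw [Finset.sum_insert h, Finset.sum_insert h, EReal.coe_add, ih]

lemma ereal_sum_ne_bot {ι : Type*} (t : Finset ι) (f : ι → EReal)
    (hbot : ∀ i ∈ t, f i ≠ ⊥) : ∑ i ∈ t, f i ≠ ⊥ := by
  classical
  induction t using Finset.induction with
  | empty => simp
  | @insert a u ha ih =>
    rw [Finset.sum_insert ha]
    intro h
    rcases EReal.add_eq_bot_iff.1 h with h' | h'
    · exact hbot a (Finset.mem_insert_self a u) h'
    · exact ih (fun i hi => hbot i (Finset.mem_insert_of_mem hi)) h'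

lemma ereal_sum_eq_top {ι : Type*} (t : Finset ι) (f : ι → EReal)
    (hbot : ∀ i ∈ t, f i ≠ ⊥) {x : ι} (hx : x ∈ t) (hfx : f x = ⊤) :
    ∑ i ∈ t, f i = ⊤ := by
  classical
  induction t using Finset.induction with
  | empty => simp at hx
  | @insert a u ha ih =>
    rw [Finset.sum_insert ha]
    rcases Finset.mem_insert.1 hx with rfl | hxu
    · rw [hfx]
      exact EReal.top_add_of_ne_bot
        (ereal_sum_ne_bot u f fun i hi => hbot i (Finset.mem_insert_of_mem hi))
    · rw [ih (fun i hi => hbot i (Finset.mem_insert_of_mem hi)) hxu]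
      exact EReal.add_top_of_ne_bot (hbot a (Finset.mem_insert_self a u))

lemma ereal_le_of_forall_le_add {a b : EReal}
    (h : ∀ ε : ℝ, 0 < ε → a ≤ b + (ε : EReal)) : a ≤ b := by
  induction b with
  | bot =>
    have h1 := h 1 one_pos
    rwa [EReal.bot_add] at h1
  | coe y =>
    induction a with
    | bot => exact bot_le
    | coe x =>
      refine EReal.coe_le_coe_iff.2 (le_of_forall_pos_le_add fun ε hε => ?_)
      have := h ε hε
      rwa [← EReal.coe_add, EReal.coe_le_coe_iff] at this
    | top =>
      have h1 := h 1 one_pos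
      rw [← EReal.coe_add] at h1
      exact absurd (top_le_iff.1 h1) (EReal.coe_ne_top _)
  | top => exact le_top

/-! ### Gibbs' inequality (real version) -/

lemma gibbs_real {ι : Type*} (t : Finset ι) (q g : ι → ℝ)
    (hq0 : ∀ i ∈ t, 0 ≤ q i) (hg : ∀ i ∈ t, 0 < g i) (hq1 : ∑ i ∈ t, q i = 1) :
    - Real.log (∑ i ∈ t, g i) ≤ ∑ i ∈ t, q i * Real.log (q i / g i) := by
  classical
  set t' : Finset ι := t.filter (fun i => q i ≠ 0) with ht'
  have ht't : t' ⊆ t := Finset.filter_subset _ _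
  have hqpos : ∀ i ∈ t', 0 < q i := fun i hi => by
    rcases Finset.mem_filter.1 hi with ⟨hit, hne⟩
    exact lt_of_le_of_ne (hq0 i hit) (Ne.symm hne)
  have hq1' : ∑ i ∈ t', q i = 1 := by
    rw [ht', Finset.sum_filter_ne_zero, hq1]
  have ht'ne : t'.Nonempty := by
    rcases Finset.exists_ne_zero_of_sum_ne_zero (by rw [hq1']; norm_num :
      ∑ i ∈ t', q i ≠ 0) with ⟨i, hi, _⟩
    exact ⟨i, hi⟩
  have hsum_eq : ∑ i ∈ t', q i * Real.log (q i / g i) = ∑ i ∈ t, q i * Real.log (q i / g i) := by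
    rw [ht']
    exact Finset.sum_filter_of_ne (fun i _ hne => by
      intro hq; rw [hq, zero_mul] at hne; exact hne rfl)
  have hjensen : ∑ i ∈ t', q i • Real.log (g i / q i) ≤
      Real.log (∑ i ∈ t', q i • (g i / q i)) := by
    refine (strictConcaveOn_log_Ioi.concaveOn).le_map_sum
      (fun i hi => (hqpos i hi).le) hq1' (fun i hi => ?_)
    exact Set.mem_Ioi.2 (div_pos (hg i (ht't hi)) (hqpos i hi))
  have hptsum : ∑ i ∈ t', q i • (g i / q i) = ∑ i ∈ t', g i := by
    refine Finset.sum_congr rfl fun i hi => ?_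
    rw [smul_eq_mul, mul_comm, div_mul_cancel₀ _ (hqpos i hi).ne']
  have hlogmono : Real.log (∑ i ∈ t', g i) ≤ Real.log (∑ i ∈ t, g i) := by
    refine Real.log_le_log (Finset.sum_pos (fun i hi => hg i (ht't hi)) ht'ne) ?_
    exact Finset.sum_le_sum_of_subset_of_nonneg ht't (fun i hi _ => (hg i hi).le)
  have hneg : ∑ i ∈ t', q i • Real.log (g i / q i)
      = - ∑ i ∈ t', q i * Real.log (q i / g i) := by
    rw [← Finset.sum_neg_distrib]
    refine Finset.sum_congr rfl fun i hi => ?_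
    rw [smul_eq_mul, Real.log_div (hg i (ht't hi)).ne' (hqpos i hi).ne',
      Real.log_div (hqpos i hi).ne' (hg i (ht't hi)).ne']
    ring
  rw [← hsum_eq]
  have := hjensen
  rw [hptsum, hneg] at this
  linarith [hlogmono]

section Main

variable {d r : ℕ} (p : Fin r → Fin d → ℝ)

open Classical in
/-- The common support. -/
noncomputable def Iset : Finset (Fin d) := Finset.univ.filter (fun i => ∀ x, p x i ≠ 0)

lemma mem_Iset {i : Fin d} : i ∈ Iset p ↔ ∀ x, p x i ≠ 0 := by
  classical
  simp [Iset]

/-- Log-linear exponent. -/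
noncomputable def aexp (s : Fin r → ℝ) (i : Fin d) : ℝ := ∑ x, s x * Real.log (p x i)

/-- Partition function. -/
noncomputable def Z (s : Fin r → ℝ) : ℝ := ∑ i ∈ Iset p, Real.exp (aexp p s i)

/-- Normalized geometric mixture. -/
noncomputable def qg (s : Fin r → ℝ) : Fin d → ℝ :=
  fun i => if i ∈ Iset p then Real.exp (aexp p s i) / Z p s else 0

noncomputable def B (s : Fin r → ℝ) (x : Fin r) : ℝ :=
  ∑ i ∈ Iset p, qg p s i * Real.log (p x i)

variable (hne : (Iset p).Nonempty)

include hne in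
lemma Zpos (s : Fin r → ℝ) : 0 < Z p s :=
  Finset.sum_pos (fun i _ => Real.exp_pos _) hne

include hne in
lemma qg_nonneg (s : Fin r → ℝ) (i : Fin d) : 0 ≤ qg p s i := by
  unfold qg
  split_ifs
  · exact div_nonneg (Real.exp_pos _).le (Zpos p hne s).le
  · exact le_rfl

include hne in
lemma qg_sum_Iset (s : Fin r → ℝ) : ∑ i ∈ Iset p, qg p s i = 1 := by
  have : ∑ i ∈ Iset p, qg p s i = (∑ i ∈ Iset p, Real.exp (aexp p s i)) / Z p s := by
    rw [Finset.sum_div]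
    exact Finset.sum_congr rfl fun i hi => by rw [qg, if_pos hi]
  rw [this]
  exact div_self (Zpos p hne s).ne'

include hne in
lemma qg_mem (s : Fin r → ℝ) : qg p s ∈ probSimplex d := by
  refine ⟨qg_nonneg p hne s, ?_⟩
  rw [← qg_sum_Iset p hne s]
  symm
  refine Finset.sum_subset (Finset.subset_univ _) fun i _ hi => ?_
  rw [qg, if_neg hi]

lemma qg_abs (s : Fin r → ℝ) (x : Fin r) (i : Fin d) (h : p x i = 0) : qg p s i = 0 := by
  rw [qg, if_neg]
  intro hi
  exact (mem_Iset p).1 hi x h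

lemma sum_qg_aexp (s u : Fin r → ℝ) :
    ∑ i ∈ Iset p, qg p s i * aexp p u i = ∑ y, u y * B p s y := by
  unfold aexp B
  simp_rw [Finset.mul_sum]
  rw [Finset.sum_comm]
  exact Finset.sum_congr rfl fun y _ => Finset.sum_congr rfl fun i _ => by ring

include hne in
lemma klDivE_qg (s : Fin r → ℝ) (x : Fin r) :
    klDivE (qg p s) (p x) =
      (((∑ y, s y * B p s y) - Real.log (Z p s) - B p s x : ℝ) : EReal) := by
  rw [klDivE, if_pos (fun i h => qg_abs p s x i h)]
  congr 1
  have h1 : ∑ i, qg p s i * Real.log (qg p s i / p x i)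
      = ∑ i ∈ Iset p, qg p s i * Real.log (qg p s i / p x i) :=
    (Finset.sum_subset (Finset.subset_univ _)
      (fun i _ hi => by rw [qg, if_neg hi, zero_mul])).symm
  have h2 : ∀ i ∈ Iset p, qg p s i * Real.log (qg p s i / p x i)
      = qg p s i * aexp p s i - qg p s i * Real.log (Z p s)
        - qg p s i * Real.log (p x i) := by
    intro i hi
    have hpx : p x i ≠ 0 := (mem_Iset p).1 hi x
    have hq : qg p s i = Real.exp (aexp p s i) / Z p s := by rw [qg, if_pos hi]
    have hqne : qg p s i ≠ 0 := by
      rw [hq]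
      exact (div_pos (Real.exp_pos _) (Zpos p hne s)).ne'
    rw [Real.log_div hqne hpx, hq, Real.log_div (Real.exp_ne_zero _) (Zpos p hne s).ne',
      Real.log_exp, ← hq]
    ring
  rw [h1, Finset.sum_congr rfl h2, Finset.sum_sub_distrib, Finset.sum_sub_distrib,
    sum_qg_aexp, ← Finset.sum_mul, qg_sum_Iset p hne s, one_mul]
  rfl

lemma aexp_affine (s t : Fin r → ℝ) (h : ℝ) (i : Fin d) :
    aexp p (s + h • (t - s)) i = aexp p s i + h * (aexp p t i - aexp p s i) := by
  simp only [aexp, Pi.add_apply, Pi.smul_apply, Pi.sub_apply, smul_eq_mul]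
  rw [← Finset.sum_sub_distrib, Finset.mul_sum, ← Finset.sum_add_distrib]
  exact Finset.sum_congr rfl fun x _ => by ring

lemma klDivE_ne_bot (q pp : Fin d → ℝ) : klDivE q pp ≠ ⊥ := by
  rw [klDivE]
  split_ifs
  · exact EReal.coe_ne_bot _
  · exact top_ne_bot

lemma mul_klDivE_ne_bot {c : ℝ} (hc : 0 ≤ c) (q pp : Fin d → ℝ) :
    (c : EReal) * klDivE q pp ≠ ⊥ := by
  rw [klDivE]
  split_ifs
  · rw [← EReal.coe_mul]
    exact EReal.coe_ne_bot _
  · rcases eq_or_lt_of_le hc with h | h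
    · rw [← h]
      simp
    · rw [EReal.coe_mul_top_of_pos h]
      exact top_ne_bot

lemma weak_pointwise (hr : 0 < r) (s : Fin r → ℝ) (hs : s ∈ probSimplex r)
    (q : Fin d → ℝ) :
    ∑ x, (s x : EReal) * klDivE q (p x) ≤ ⨆ x, klDivE q (p x) := by
  by_cases htop : ∃ x0, klDivE q (p x0) = ⊤
  · rcases htop with ⟨x0, hx0⟩
    have : (⨆ x, klDivE q (p x)) = ⊤ :=
      top_unique (hx0 ▸ le_iSup (fun x => klDivE q (p x)) x0)
    rw [this]
    exact le_top
  · push_neg at htop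
    have hcond : ∀ x, ∀ i, p x i = 0 → q i = 0 := by
      intro x
      by_contra hc
      exact htop x (by rw [klDivE, if_neg hc])
    set c : Fin r → ℝ := fun x => ∑ i, q i * Real.log (q i / p x i) with hc
    have hkl : ∀ x, klDivE q (p x) = ((c x : ℝ) : EReal) := fun x => by
      rw [klDivE, if_pos (hcond x)]
    obtain ⟨x0, -, hx0⟩ := Finset.exists_max_image Finset.univ c
      ⟨⟨0, hr⟩, Finset.mem_univ _⟩
    calc ∑ x, (s x : EReal) * klDivE q (p x)
        = ((∑ x, s x * c x : ℝ) : EReal) := by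
          rw [ereal_coe_sum]
          exact Finset.sum_congr rfl fun x _ => by rw [hkl x, EReal.coe_mul]
      _ ≤ ((c x0 : ℝ) : EReal) := by
          refine EReal.coe_le_coe_iff.2 ?_
          calc ∑ x, s x * c x ≤ ∑ x, s x * c x0 := by
                refine Finset.sum_le_sum fun x _ => ?_
                exact mul_le_mul_of_nonneg_left (hx0 x (Finset.mem_univ x)) (hs.1 x)
            _ = c x0 := by rw [← Finset.sum_mul, hs.2, one_mul]
      _ ≤ ⨆ x, klDivE q (p x) := (hkl x0) ▸ le_iSup (fun x => klDivE q (p x)) x0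

include hne in
lemma gibbs_ereal (s : Fin r → ℝ) (hs : s ∈ probSimplex r) (hspos : ∀ x, 0 < s x)
    (q : Fin d → ℝ) (hq : q ∈ probSimplex d) :
    ((- Real.log (Z p s) : ℝ) : EReal) ≤ ∑ x, (s x : EReal) * klDivE q (p x) := by
  by_cases htop : ∃ x0, ¬ (∀ i, p x0 i = 0 → q i = 0)
  · rcases htop with ⟨x0, hx0⟩
    have hsum : ∑ x, (s x : EReal) * klDivE q (p x) = ⊤ := by
      refine ereal_sum_eq_top Finset.univ _
        (fun x _ => mul_klDivE_ne_bot (hspos x).le q (p x)) (Finset.mem_univ x0) ?_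
      rw [klDivE, if_neg hx0, EReal.coe_mul_top_of_pos (hspos x0)]
    rw [hsum]
    exact le_top
  · push_neg at htop
    -- all divergences are finite
    have hkl : ∀ x, klDivE q (p x)
        = ((∑ i, q i * Real.log (q i / p x i) : ℝ) : EReal) := fun x => by
      rw [klDivE, if_pos (htop x)]
    have hqI : ∀ i, i ∉ Iset p → q i = 0 := by
      intro i hi
      rw [mem_Iset] at hi
      push_neg at hi
      rcases hi with ⟨x, hx⟩
      exact htop x i hx
    have hq1I : ∑ i ∈ Iset p, q i = 1 := by
      rw [← hq.2]
      exact Finset.sum_subset (Finset.subset_univ _) (fun i _ hi => hqI i hi)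
    -- the key real inequality
    have key : - Real.log (Z p s) ≤ ∑ x, s x * ∑ i, q i * Real.log (q i / p x i) := by
      have hswap : ∑ x, s x * ∑ i, q i * Real.log (q i / p x i)
          = ∑ i, ∑ x, s x * (q i * Real.log (q i / p x i)) := by
        simp_rw [Finset.mul_sum]
        exact Finset.sum_comm
      have hdrop : ∑ i, ∑ x, s x * (q i * Real.log (q i / p x i))
          = ∑ i ∈ Iset p, ∑ x, s x * (q i * Real.log (q i / p x i)) := by
        refine (Finset.sum_subset (Finset.subset_univ _) (fun i _ hi => ?_)).symm
        simp [hqI i hi]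
      have hterm : ∀ i ∈ Iset p, ∑ x, s x * (q i * Real.log (q i / p x i))
          = q i * Real.log (q i / Real.exp (aexp p s i)) := by
        intro i hi
        rcases eq_or_lt_of_le (hq.1 i) with hqi | hqi
        · simp [← hqi]
        · have hlog : ∀ x, Real.log (q i / p x i)
              = Real.log (q i) - Real.log (p x i) :=
            fun x => Real.log_div hqi.ne' ((mem_Iset p).1 hi x)
          simp_rw [hlog]
          rw [Real.log_div hqi.ne' (Real.exp_ne_zero _), Real.log_exp]
          have : ∑ x, s x * (q i * (Real.log (q i) - Real.log (p x i)))
              = (∑ x, s x) * (q i * Real.log (q i)) - q i * aexp p s i := by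
            rw [aexp, Finset.mul_sum, Finset.sum_mul, ← Finset.sum_sub_distrib]
            exact Finset.sum_congr rfl fun x _ => by ring
          rw [this, hs.2]
          ring
      rw [hswap, hdrop, Finset.sum_congr rfl hterm]
      exact gibbs_real (Iset p) q (fun i => Real.exp (aexp p s i))
        (fun i _ => hq.1 i) (fun i _ => Real.exp_pos _) hq1I
    calc ((- Real.log (Z p s) : ℝ) : EReal)
        ≤ ((∑ x, s x * ∑ i, q i * Real.log (q i / p x i) : ℝ) : EReal) :=
          EReal.coe_le_coe_iff.2 key
      _ = ∑ x, (s x : EReal) * klDivE q (p x) := by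
          rw [ereal_coe_sum]
          exact Finset.sum_congr rfl fun x _ => by rw [hkl x, EReal.coe_mul]

include hne in
lemma deriv_nonneg_of_max (s t : Fin r → ℝ)
    (hmax : ∀ h : ℝ, h ∈ Set.Icc (0:ℝ) 1 →
      - Real.log (Z p (s + h • (t - s))) ≤ - Real.log (Z p s)) :
    0 ≤ ∑ i ∈ Iset p, (aexp p t i - aexp p s i) * Real.exp (aexp p s i) := by
  set c : Fin d → ℝ := fun i => aexp p t i - aexp p s i with hc
  set g : ℝ → ℝ := fun h => ∑ i ∈ Iset p, Real.exp (aexp p s i + h * c i) with hg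
  have hgval : ∀ h : ℝ, g h = Z p (s + h • (t - s)) := by
    intro h
    refine Finset.sum_congr rfl fun i _ => ?_
    rw [aexp_affine]
  have hgpos : ∀ h : ℝ, 0 < g h := fun h =>
    Finset.sum_pos (fun i _ => Real.exp_pos _) hne
  have hgderiv : HasDerivAt g (∑ i ∈ Iset p, Real.exp (aexp p s i) * c i) 0 := by
    have : ∀ i ∈ Iset p, HasDerivAt (fun h : ℝ => Real.exp (aexp p s i + h * c i))
        (Real.exp (aexp p s i) * c i) 0 := by
      intro i _
      have := (((hasDerivAt_id (0:ℝ)).mul_const (c i)).const_add (aexp p s i)).exp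
      simpa using this
    have hsum := HasDerivAt.fun_sum this
    simpa using hsum
  set D : ℝ := -((∑ i ∈ Iset p, Real.exp (aexp p s i) * c i) / g 0) with hD
  have hφ : HasDerivAt (fun h : ℝ => - Real.log (g h)) D 0 := by
    have := (hgderiv.log (hgpos 0).ne').fun_neg
    simpa [hD] using this
  have hφle : ∀ h ∈ Set.Ioc (0:ℝ) 1, - Real.log (g h) ≤ - Real.log (g 0) := by
    intro h hh
    have h0 : s + (0:ℝ) • (t - s) = s := by simp
    rw [hgval h, hgval 0, h0]
    exact hmax h ⟨hh.1.le, hh.2⟩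
  have hD0 : D ≤ 0 := by
    have hslope : Filter.Tendsto (slope (fun h : ℝ => - Real.log (g h)) 0)
        (nhdsWithin 0 (Set.Ioi 0)) (nhds D) := by
      refine (hasDerivAt_iff_tendsto_slope.1 hφ).mono_left (nhdsWithin_mono 0 ?_)
      intro x hx
      exact (ne_of_gt hx)
    refine le_of_tendsto hslope ?_
    have hmem : Set.Ioc (0:ℝ) 1 ∈ nhdsWithin 0 (Set.Ioi 0) :=
      Ioc_mem_nhdsGT_of_mem ⟨le_refl 0, one_pos⟩
    filter_upwards [hmem] with h hh
    rw [slope_def_field]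
    have hnum : - Real.log (g h) - - Real.log (g 0) ≤ 0 := sub_nonpos.2 (hφle h hh)
    have hden : 0 < h - 0 := by simpa using hh.1
    exact div_nonpos_of_nonpos_of_nonneg hnum hden.le
  have : 0 ≤ (∑ i ∈ Iset p, Real.exp (aexp p s i) * c i) / g 0 := by
    simpa [hD, neg_nonpos] using hD0
  have h2 : 0 ≤ ∑ i ∈ Iset p, Real.exp (aexp p s i) * c i := by
    by_contra hcon
    push_neg at hcon
    exact absurd this (not_le.2 (div_neg_of_neg_of_pos hcon (hgpos 0)))
  calc (0:ℝ) ≤ ∑ i ∈ Iset p, Real.exp (aexp p s i) * c i := h2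
    _ = ∑ i ∈ Iset p, c i * Real.exp (aexp p s i) :=
        Finset.sum_congr rfl fun i _ => mul_comm _ _

/-- A uniform bound for the logarithms on the common support. -/
noncomputable def Mb : ℝ := 1 + ∑ y, ∑ i ∈ Iset p, |Real.log (p y i)|

lemma Mb_pos : 0 < Mb p := by
  have : (0:ℝ) ≤ ∑ y, ∑ i ∈ Iset p, |Real.log (p y i)| :=
    Finset.sum_nonneg fun y _ => Finset.sum_nonneg fun i _ => abs_nonneg _
  unfold Mb
  linarith

lemma abs_log_le (y : Fin r) {i : Fin d} (hi : i ∈ Iset p) :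
    |Real.log (p y i)| ≤ Mb p := by
  have h1 : |Real.log (p y i)| ≤ ∑ i ∈ Iset p, |Real.log (p y i)| :=
    Finset.single_le_sum (f := fun j => |Real.log (p y j)|) (fun j _ => abs_nonneg _) hi
  have h2 : ∑ i ∈ Iset p, |Real.log (p y i)|
      ≤ ∑ y, ∑ i ∈ Iset p, |Real.log (p y i)| :=
    Finset.single_le_sum (f := fun y' => ∑ i ∈ Iset p, |Real.log (p y' i)|)
      (fun y' _ => Finset.sum_nonneg fun i _ => abs_nonneg _) (Finset.mem_univ y)
  unfold Mb
  linarith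

include hne in
lemma B_abs_le (s : Fin r → ℝ) (y : Fin r) : |B p s y| ≤ Mb p := by
  unfold B
  calc |∑ i ∈ Iset p, qg p s i * Real.log (p y i)|
      ≤ ∑ i ∈ Iset p, |qg p s i * Real.log (p y i)| := Finset.abs_sum_le_sum_abs _ _
    _ = ∑ i ∈ Iset p, qg p s i * |Real.log (p y i)| := by
        refine Finset.sum_congr rfl fun i _ => ?_
        rw [abs_mul, abs_of_nonneg (qg_nonneg p hne s i)]
    _ ≤ ∑ i ∈ Iset p, qg p s i * Mb p := by
        refine Finset.sum_le_sum fun i hi => ?_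
        exact mul_le_mul_of_nonneg_left (abs_log_le p y hi) (qg_nonneg p hne s i)
    _ = Mb p := by rw [← Finset.sum_mul, qg_sum_Iset p hne s, one_mul]

include hne in
lemma exists_good_s (hr : 0 < r) (δ : ℝ) (hδ : 0 < δ) (hδr : δ * r ≤ 1/2) :
    ∃ s : Fin r → ℝ, s ∈ probSimplex r ∧ (∀ y, 0 < s y) ∧
      ∀ x, (∑ y, s y * B p s y) - B p s x ≤ 2 * δ * r * Mb p := by
  have hrpos : (0:ℝ) < r := Nat.cast_pos.2 hr
  set K : Set (Fin r → ℝ) := {s | (∀ y, δ ≤ s y) ∧ ∑ y, s y = 1} with hK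
  -- K is compact
  have hKclosed : IsClosed K := by
    have : K = (⋂ y, (fun s : Fin r → ℝ => s y) ⁻¹' Set.Ici δ)
        ∩ ((fun s : Fin r → ℝ => ∑ y, s y) ⁻¹' {1}) := by
      ext s
      simp [hK, Set.mem_iInter]
    rw [this]
    exact IsClosed.inter (isClosed_iInter fun y => isClosed_Ici.preimage (continuous_apply y))
      (isClosed_singleton.preimage (continuous_finset_sum _ fun y _ => continuous_apply y))
  have hKsub : K ⊆ Set.Icc (fun _ => 0) (fun _ => 1) := by
    intro s hs
    constructor
    · intro y
      exact le_trans hδ.le (hs.1 y)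
    · intro y
      calc s y ≤ ∑ y', s y' :=
            Finset.single_le_sum (fun y' _ => le_trans hδ.le (hs.1 y')) (Finset.mem_univ y)
        _ = 1 := hs.2
  have hKcompact : IsCompact K := IsCompact.of_isClosed_subset isCompact_Icc hKclosed hKsub
  have hKne : K.Nonempty := by
    refine ⟨fun _ => 1 / r, fun y => ?_, ?_⟩
    · show δ ≤ 1 / (r:ℝ)
      rw [le_div_iff₀ hrpos]
      linarith
    · rw [Finset.sum_const, Finset.card_univ, Fintype.card_fin, nsmul_eq_mul]
      field_simp
  have hFcont : ContinuousOn (fun s : Fin r → ℝ => - Real.log (Z p s)) K := by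
    have hZc : Continuous (Z p) := by
      refine continuous_finset_sum _ fun i _ => Real.continuous_exp.comp ?_
      exact continuous_finset_sum _ fun x _ => (continuous_apply x).mul continuous_const
    intro s _
    exact (((Real.continuousAt_log (Zpos p hne s).ne').comp hZc.continuousAt).neg).continuousWithinAt
  obtain ⟨s, hsK, hmax⟩ := hKcompact.exists_isMaxOn hKne hFcont
  have hspos : ∀ y, 0 < s y := fun y => lt_of_lt_of_le hδ (hsK.1 y)
  refine ⟨s, ⟨fun y => (hspos y).le, hsK.2⟩, hspos, fun x => ?_⟩
  -- perturbation direction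
  set t : Fin r → ℝ := fun y => δ + (if y = x then 1 - δ * r else 0) with ht
  have h1δr : (0:ℝ) ≤ 1 - δ * r := by linarith
  have htK : t ∈ K := by
    constructor
    · intro y
      have : (0:ℝ) ≤ (if y = x then 1 - δ * r else 0) := by
        split_ifs
        · exact h1δr
        · exact le_rfl
      simp only [ht]
      linarith
    · simp only [ht]
      rw [Finset.sum_add_distrib, Finset.sum_const, Finset.card_univ, Fintype.card_fin,
        nsmul_eq_mul, Finset.sum_ite_eq' Finset.univ x (fun _ => 1 - δ * r),
        if_pos (Finset.mem_univ x)]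
      ring
  -- points on the segment stay in K
  have hseg : ∀ h : ℝ, h ∈ Set.Icc (0:ℝ) 1 →
      - Real.log (Z p (s + h • (t - s))) ≤ - Real.log (Z p s) := by
    intro h hh
    refine hmax ?_
    constructor
    · intro y
      simp only [Pi.add_apply, Pi.smul_apply, Pi.sub_apply, smul_eq_mul]
      nlinarith [mul_nonneg (sub_nonneg.2 hh.2) (sub_nonneg.2 (hsK.1 y)),
        mul_nonneg hh.1 (sub_nonneg.2 (htK.1 y))]
    · simp only [Pi.add_apply, Pi.smul_apply, Pi.sub_apply, smul_eq_mul]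
      rw [Finset.sum_add_distrib, ← Finset.mul_sum, Finset.sum_sub_distrib,
        hsK.2, htK.2]
      ring
  have hd := deriv_nonneg_of_max p hne s t hseg
  -- divide by Z : first-order condition in terms of B
  have h3 : 0 ≤ ∑ i ∈ Iset p, qg p s i * (aexp p t i - aexp p s i) := by
    have heq : ∑ i ∈ Iset p, qg p s i * (aexp p t i - aexp p s i)
        = (∑ i ∈ Iset p, (aexp p t i - aexp p s i) * Real.exp (aexp p s i)) / Z p s := by
      rw [Finset.sum_div]
      refine Finset.sum_congr rfl fun i hi => ?_
      rw [qg, if_pos hi]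
      ring
    rw [heq]
    exact div_nonneg hd (Zpos p hne s).le
  have key : ∑ y, s y * B p s y ≤ ∑ y, t y * B p s y := by
    have hsplit : ∑ i ∈ Iset p, qg p s i * (aexp p t i - aexp p s i)
        = (∑ y, t y * B p s y) - ∑ y, s y * B p s y := by
      simp_rw [mul_sub]
      rw [Finset.sum_sub_distrib, sum_qg_aexp, sum_qg_aexp]
    rw [hsplit] at h3
    linarith
  have htB : ∑ y, t y * B p s y
      = δ * (∑ y, B p s y) + (1 - δ * r) * B p s x := by
    simp only [ht]
    simp_rw [add_mul, ite_mul, zero_mul]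
    rw [Finset.sum_add_distrib, ← Finset.mul_sum,
      Finset.sum_ite_eq' Finset.univ x (fun y => (1 - δ * r) * B p s y),
      if_pos (Finset.mem_univ x)]
  -- bounds
  have hBb : ∀ y, |B p s y| ≤ Mb p := B_abs_le p hne s
  have hsumB : ∑ y, B p s y ≤ r * Mb p := by
    calc ∑ y, B p s y ≤ ∑ _y : Fin r, Mb p :=
          Finset.sum_le_sum fun y _ => (abs_le.1 (hBb y)).2
      _ = r * Mb p := by
          rw [Finset.sum_const, Finset.card_univ, Fintype.card_fin, nsmul_eq_mul]
  have hBx : - Mb p ≤ B p s x := (abs_le.1 (hBb x)).1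
  have := key
  rw [htB] at this
  nlinarith [mul_le_mul_of_nonneg_left hsumB hδ.le, mul_le_mul_of_nonneg_left hBx (mul_nonneg hδ.le hrpos.le)]

end Main

end ClassicalDivRadius

open ClassicalDivRadius in
/-- Classical minimax identity for the divergence radius: if the supports of
`p_1,…,p_r` have a common point, then
`inf_q max_x D(q‖p_x) = sup_{s∈P_r} inf_q Σ_x s_x D(q‖p_x)`, with `q` ranging over
distributions on `Fin d`. -/
theorem classical_divergence_radius_minimax
    {d r : ℕ} (hr : 0 < r) (p : Fin r → Fin d → ℝ)
    (hp0 : ∀ x i, 0 ≤ p x i) (hp1 : ∀ x, ∑ i, p x i = 1)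
    (hcommon : ∃ i, ∀ x, p x i ≠ 0) :
    (⨅ q : probSimplex d, ⨆ x, klDivE (q : Fin d → ℝ) (p x)) =
      ⨆ s : probSimplex r,
        ⨅ q : probSimplex d, ∑ x, ((s : Fin r → ℝ) x : EReal) * klDivE (q : Fin d → ℝ) (p x) := by
  classical
  obtain ⟨i0, hi0⟩ := hcommon
  have hne : (Iset p).Nonempty := ⟨i0, (mem_Iset p).2 hi0⟩
  refine le_antisymm ?_ (iSup_le fun s => le_iInf fun q =>
    (iInf_le _ q).trans (weak_pointwise p hr s.1 s.2 q.1))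
  refine ereal_le_of_forall_le_add fun ε hε => ?_
  have hM := Mb_pos p
  have hrpos : (0:ℝ) < r := Nat.cast_pos.2 hr
  set δ : ℝ := min (ε / (2 * r * Mb p)) (1 / (2 * r)) with hδdef
  have hδpos : 0 < δ := lt_min (div_pos hε (by positivity)) (by positivity)
  have hδr : δ * r ≤ 1 / 2 := by
    calc δ * r ≤ (1 / (2 * r)) * r :=
          mul_le_mul_of_nonneg_right (min_le_right _ _) hrpos.le
      _ = 1 / 2 := by
          field_simp
  obtain ⟨s, hsP, hspos, hkey⟩ := exists_good_s p hne hr δ hδpos hδr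
  have h2δ : 2 * δ * r * Mb p ≤ ε := by
    have h1 : δ ≤ ε / (2 * r * Mb p) := min_le_left _ _
    have h2 := mul_le_mul_of_nonneg_right h1 (by positivity : (0:ℝ) ≤ 2 * r * Mb p)
    rw [div_mul_cancel₀ ε (by positivity : (2 * (r:ℝ) * Mb p) ≠ 0)] at h2
    calc 2 * δ * r * Mb p = δ * (2 * r * Mb p) := by ring
      _ ≤ ε := h2
  have hstep1 : (⨅ q : probSimplex d, ⨆ x, klDivE (q : Fin d → ℝ) (p x))
      ≤ ⨆ x, klDivE (qg p s) (p x) :=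
    iInf_le (fun q : probSimplex d => ⨆ x, klDivE (q : Fin d → ℝ) (p x))
      ⟨qg p s, qg_mem p hne s⟩
  have hstep2 : (⨆ x, klDivE (qg p s) (p x))
      ≤ (((- Real.log (Z p s) + ε : ℝ)) : EReal) := by
    refine iSup_le fun x => ?_
    rw [klDivE_qg p hne s x]
    refine EReal.coe_le_coe_iff.2 ?_
    have := hkey x
    linarith
  have hstep3 : ((- Real.log (Z p s) : ℝ) : EReal)
      ≤ ⨆ s' : probSimplex r,
          ⨅ q : probSimplex d, ∑ x, ((s' : Fin r → ℝ) x : EReal) * klDivE (q : Fin d → ℝ) (p x) := by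
    refine le_trans ?_ (le_iSup (fun s' : probSimplex r =>
      ⨅ q : probSimplex d, ∑ x, ((s' : Fin r → ℝ) x : EReal) * klDivE (q : Fin d → ℝ) (p x))
      (⟨s, hsP⟩ : probSimplex r))
    exact le_iInf fun q => gibbs_ereal p hne s hsP hspos q.1 q.2
  refine hstep1.trans (hstep2.trans ?_)
  rw [EReal.coe_add]
  exact add_le_add_left hstep3 _
end
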